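/- arXiv:1410.6468 — 4 statements merged into one kernel-verified Lean document; each statement's English description precedes it below -/
import Mathlib

section
/- Let E and F be real topological vector spaces (or locally convex spaces), U ⊆ E_ℂ an open connected subset of the complexification of E with U ∩ E ≠ ∅, and f₁, f₂ : U → F_ℂ complex analytic maps. If f₁ and f₂ agree on E ∩ U, then f₁ = f₂ on all of U. -/
open Filter Topology
open scoped ENNReal NNReal

private lemma auxFreq {G : Type*} [NormedAddCommGroup G] [NormedSpace ℂ G]
    {h : ℂ → G} {δ : ℝ} (hδ : 0 < δ) (hz : ∀ x : ℝ, |x| < δ → h x = 0) :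
    ∃ᶠ t in 𝓝[≠] (0 : ℂ), h t = 0 := by
  have ht : Tendsto (fun x : ℝ => (x : ℂ)) (𝓝[≠] (0 : ℝ)) (𝓝[≠] (0 : ℂ)) := by
    apply tendsto_nhdsWithin_of_tendsto_nhds_of_eventually_within
    · have := Complex.continuous_ofReal.tendsto 0
      simpa using this.mono_left nhdsWithin_le_nhds
    · filter_upwards [self_mem_nhdsWithin] with x hx
      simpa using hx
  have hev : ∀ᶠ x : ℝ in 𝓝[≠] (0 : ℝ), h (x : ℂ) = 0 := by
    have h1 : ∀ᶠ x in 𝓝 (0 : ℝ), |x| < δ := by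
      filter_upwards [Metric.ball_mem_nhds (0 : ℝ) hδ] with x hx
      simpa [Real.dist_eq] using hx
    have h2 : ∀ᶠ x in 𝓝[≠] (0 : ℝ), |x| < δ := nhdsWithin_le_nhds h1
    filter_upwards [h2] with x hx using hz x hx
  exact ht.frequently hev.frequently

private lemma auxCoeff {G : Type*} [NormedAddCommGroup G] [NormedSpace ℂ G]
    (c : ℕ → G) {δ : ℝ} (hδ : 0 < δ)
    (h : ∀ t : ℂ, ‖t‖ < δ → HasSum (fun n => t ^ n • c n) (0 : G)) :
    ∀ n, c n = 0 := by
  set q : FormalMultilinearSeries ℂ ℂ G :=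
    fun n => ContinuousMultilinearMap.mkPiRing ℂ (Fin n) (c n) with hq
  have hqapp : ∀ (n : ℕ) (t : ℂ), (q n) (fun _ => t) = t ^ n • c n := by
    intro n t
    simp [hq, ContinuousMultilinearMap.mkPiRing_apply, Finset.prod_const]
  have hd2 : (0:ℝ) < δ / 2 := half_pos hδ
  have hrad : ENNReal.ofReal (δ / 2) ≤ q.radius := by
    have hlt : ‖((δ / 2 : ℝ) : ℂ)‖ < δ := by
      rw [Complex.norm_real, Real.norm_eq_abs, abs_of_pos hd2]
      linarith
    have hsum := (h ((δ / 2 : ℝ) : ℂ) hlt).summable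
    have htend2 : Tendsto (fun n => ‖q n‖ * ((δ/2 : ℝ).toNNReal : ℝ) ^ n) atTop (𝓝 0) := by
      have h0 := tendsto_zero_iff_norm_tendsto_zero.mp hsum.tendsto_atTop_zero
      refine h0.congr fun n => ?_
      rw [norm_smul, norm_pow, Complex.norm_real, Real.norm_eq_abs, abs_of_pos hd2,
        Real.coe_toNNReal _ hd2.le]
      simp only [hq, ContinuousMultilinearMap.norm_mkPiRing]
      ring
    exact q.le_radius_of_tendsto htend2
  have hball : HasFPowerSeriesOnBall (fun _ : ℂ => (0:G)) q 0 (ENNReal.ofReal (δ/2)) := by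
    refine ⟨hrad, ENNReal.ofReal_pos.mpr hd2, ?_⟩
    intro y hy
    rw [Metric.mem_eball, edist_zero_right, ← ofReal_norm,
      ENNReal.ofReal_lt_ofReal_iff hd2] at hy
    have hy' : ‖y‖ < δ := by linarith
    have := h y hy'
    simp only [hqapp]
    simpa using this
  have hzero : q = 0 := HasFPowerSeriesAt.eq_zero hball.hasFPowerSeriesAt
  intro n
  have := congrFun hzero n
  have happ := congrArg (fun (m : ContinuousMultilinearMap ℂ (fun _ : Fin n => ℂ) G) =>
    m (fun _ => (1:ℂ))) this
  simpa [hqapp] using happ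

/-- Identity Theorem for complex analytic maps on the complexification: if two
complex analytic maps on a connected open subset `U` of the complexification `Fc`
of `E` (with `E` realized as the fixed points of the conjugation `σ`, a totally
real generating subspace) agree on `E ∩ U ≠ ∅`, then they agree on `U`. -/
theorem stmt7 {E : Type*} [NormedAddCommGroup E] [NormedSpace ℝ E]
    {Fc Gc : Type*} [NormedAddCommGroup Fc] [NormedSpace ℂ Fc]
    [NormedAddCommGroup Gc] [NormedSpace ℂ Gc]
    (ι : E →ₗ[ℝ] Fc) (σ : Fc →ₗ[ℝ] Fc)
    (hσσ : σ ∘ σ = id)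
    (hσi : ∀ x : Fc, σ ((Complex.I : ℂ) • x) = -((Complex.I : ℂ) • σ x))
    (hfix : Set.range ι = {x : Fc | σ x = x})
    (hspan : Submodule.span ℂ (Set.range ι) = ⊤)
    {U : Set Fc} (hU : IsOpen U) (hconn : IsConnected U)
    (hne : (Set.range ι ∩ U).Nonempty)
    {f₁ f₂ : Fc → Gc} (h₁ : AnalyticOnNhd ℂ f₁ U) (h₂ : AnalyticOnNhd ℂ f₂ U)
    (hagree : ∀ x ∈ Set.range ι ∩ U, f₁ x = f₂ x) :
    Set.EqOn f₁ f₂ U := by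
  -- the difference function
  set g : Fc → Gc := fun x => f₁ x - f₂ x with hg_def
  have hg : AnalyticOnNhd ℂ g U := fun x hx => (h₁ x hx).sub (h₂ x hx)
  have hgS : ∀ x ∈ Set.range ι ∩ U, g x = 0 := fun x hx => sub_eq_zero.mpr (hagree x hx)
  -- membership of real combinations in the range
  have hScomb : ∀ (a b : Fc), a ∈ Set.range ι → b ∈ Set.range ι → ∀ x : ℝ,
      a + (x : ℂ) • b ∈ Set.range ι := by
    rintro _ _ ⟨u, rfl⟩ ⟨v, rfl⟩ x
    refine ⟨u + x • v, ?_⟩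
    rw [map_add, map_smul, Complex.coe_smul]
  -- decomposition Fc = E + iE, using σ
  have hσσ' : ∀ x, σ (σ x) = x := fun x => congrFun hσσ x
  have hdecomp : ∀ y : Fc, ∃ a ∈ Set.range ι, ∃ b ∈ Set.range ι,
      y = a + (Complex.I : ℂ) • b := by
    intro y
    refine ⟨(2⁻¹ : ℝ) • (y + σ y), ?_, (2⁻¹ : ℝ) • (-((Complex.I : ℂ) • (y - σ y))), ?_, ?_⟩
    · rw [hfix]
      show σ _ = _
      rw [map_smul, map_add, hσσ']
      rw [add_comm (σ y) y]
    · rw [hfix]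
      show σ _ = _
      rw [map_smul, map_neg, hσi, neg_neg, map_sub, hσσ']
      congr 1
      rw [← smul_neg, neg_sub]
    · rw [smul_comm (Complex.I : ℂ) ((2⁻¹ : ℝ)), smul_neg, smul_smul, Complex.I_mul_I,
        neg_smul, one_smul, neg_neg, ← smul_add]
      have h2 : (y + σ y) + (y - σ y) = (2 : ℝ) • y := by
        rw [two_smul]; abel
      rw [h2, smul_smul]
      norm_num
  obtain ⟨z₀, hz₀S, hz₀U⟩ := hne
  -- a power series for g at z₀
  obtain ⟨p, hp⟩ := hg z₀ hz₀U
  obtain ⟨r₀, hpr₀⟩ := hp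
  obtain ⟨ε, hε, hball⟩ := Metric.isOpen_iff.mp hU z₀ hz₀U
  -- a positive real radius ρ with the ball inside both U and the convergence ball
  have hmin : (0 : ℝ≥0∞) < min r₀ (ENNReal.ofReal ε) :=
    lt_min hpr₀.r_pos (ENNReal.ofReal_pos.mpr hε)
  obtain ⟨cc, hc0, hclt⟩ := exists_between hmin
  have hc_top : cc < ⊤ := lt_of_lt_of_le (hclt.trans_le (min_le_right _ _)) le_top
  set ρ : ℝ := cc.toReal with hρdef
  have hρpos : 0 < ρ := ENNReal.toReal_pos hc0.ne' hc_top.ne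
  have hofρ : ENNReal.ofReal ρ = cc := ENNReal.ofReal_toReal hc_top.ne
  have hρr₀ : ENNReal.ofReal ρ ≤ r₀ := hofρ ▸ (hclt.le.trans (min_le_left _ _))
  have hρε : ρ ≤ ε := ENNReal.toReal_le_of_le_ofReal hε.le
    (hclt.le.trans (min_le_right _ _))
  have hpρ : HasFPowerSeriesOnBall g p z₀ (ENNReal.ofReal ρ) :=
    hpr₀.mono (ENNReal.ofReal_pos.mpr hρpos) hρr₀
  have hballU : Metric.ball z₀ ρ ⊆ U := (Metric.ball_subset_ball hρε).trans hball
  -- Step A: the terms of the power series vanish on the diagonal of the range of ι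
  have hA : ∀ n, ∀ w ∈ Set.range ι, (p n) (fun _ => w) = 0 := by
    intro n w hw
    set h : ℂ → Gc := fun t => g (z₀ + t • w) with hh
    have haff : AnalyticAt ℂ (fun t : ℂ => z₀ + t • w) 0 := by
      have h2 : AnalyticAt ℂ (fun t : ℂ => t • w) (0 : ℂ) := by
        exact
          (ContinuousLinearMap.toSpanSingleton ℂ w).analyticAt (0 : ℂ)
      exact analyticAt_const.add h2
    have hgan : AnalyticAt ℂ g z₀ := hg z₀ hz₀U
    have hhan : AnalyticAt ℂ h 0 := by
      have hgan' : AnalyticAt ℂ g (z₀ + (0 : ℂ) • w) := by simpa using hgan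
      have hc := AnalyticAt.comp (g := g) (f := fun t : ℂ => z₀ + t • w) (x := (0:ℂ)) hgan' haff
      simpa [hh, Function.comp_def] using hc
    set δ₁ : ℝ := ρ / (‖w‖ + 1) with hδ₁def
    have hδ₁pos : 0 < δ₁ := div_pos hρpos (by positivity)
    have hz : ∀ x : ℝ, |x| < δ₁ → h x = 0 := by
      intro x hx
      have hmem : z₀ + (x : ℂ) • w ∈ Set.range ι := hScomb _ _ hz₀S hw x
      have hnorm : ‖(x : ℂ) • w‖ < ρ := by
        rw [norm_smul, Complex.norm_real, Real.norm_eq_abs]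
        have hwp : (0:ℝ) < ‖w‖ + 1 := by positivity
        nlinarith [norm_nonneg w, abs_nonneg x, (lt_div_iff₀ hwp).mp hx]
      have hU' : z₀ + (x : ℂ) • w ∈ U := by
        apply hballU
        simpa [Metric.mem_ball, dist_eq_norm, add_sub_cancel_left] using hnorm
      exact hgS _ ⟨hmem, hU'⟩
    have hfreq := auxFreq hδ₁pos hz
    have hev := (hhan.frequently_zero_iff_eventually_zero).mp hfreq
    obtain ⟨δ₂, hδ₂, hδ₂z⟩ := Metric.eventually_nhds_iff.mp hev
    have hHS : ∀ t : ℂ, ‖t‖ < min δ₂ δ₁ → HasSum (fun m => t ^ m • (p m) (fun _ => w)) (0 : Gc) := by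
      intro t ht
      have ht₁ : ‖t‖ < δ₁ := lt_of_lt_of_le ht (min_le_right _ _)
      have h1 : ‖t • w‖ < ρ := by
        rw [norm_smul]
        have hwp : (0:ℝ) < ‖w‖ + 1 := by positivity
        nlinarith [norm_nonneg w, norm_nonneg t, (lt_div_iff₀ hwp).mp ht₁]
      have hmem : t • w ∈ Metric.eball (0 : Fc) (ENNReal.ofReal ρ) := by
        rw [Metric.mem_eball, edist_zero_right, ← ofReal_norm]
        exact (ENNReal.ofReal_lt_ofReal_iff hρpos).mpr h1
      have hsum := hpρ.hasSum hmem
      have hg0 : g (z₀ + t • w) = 0 := by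
        have := hδ₂z (y := t) (by simpa [dist_eq_norm] using lt_of_lt_of_le ht (min_le_left _ _))
        simpa [hh] using this
      rw [hg0] at hsum
      have hterm : ∀ m, (p m) (fun _ : Fin m => t • w) = t ^ m • (p m) (fun _ => w) := by
        intro m
        have := (p m).map_smul_univ (fun _ : Fin m => t) (fun _ : Fin m => w)
        simpa [Finset.prod_const] using this
      simp only [hterm] at hsum
      exact hsum
    exact auxCoeff (fun m => (p m) fun _ => w) (lt_min hδ₂ hδ₁pos) hHS n
  -- Step B: the terms of the power series vanish on the full diagonal
  have hdiag : ∀ n (y : Fc), (p n) (fun _ => y) = 0 := by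
    intro n y
    obtain ⟨a, ha, b, hb, rfl⟩ := hdecomp y
    set ψ : ℂ → Gc := fun z => (p n) (fun _ => a + z • b) with hψdef
    have hψan : AnalyticOnNhd ℂ ψ Set.univ := by
      intro z _
      have hinner : AnalyticAt ℂ (fun z : ℂ => (fun _ : Fin n => a + z • b)) z := by
        apply AnalyticAt.pi
        intro i
        have h2 : AnalyticAt ℂ (fun t : ℂ => t • b) z := by
          exact
            (ContinuousLinearMap.toSpanSingleton ℂ b).analyticAt z
        exact analyticAt_const.add h2
      exact (p n).analyticAt.comp hinner
    have hzero : ∀ x : ℝ, |x| < 1 → ψ x = 0 := fun x _ => hA n _ (hScomb a b ha hb x)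
    have hfreq := auxFreq one_pos hzero
    have hev := (hψan 0 trivial).frequently_zero_iff_eventually_zero.mp hfreq
    have heq := hψan.eqOn_zero_of_preconnected_of_eventuallyEq_zero
      isPreconnected_univ (Set.mem_univ (0 : ℂ)) hev
    have := heq (Set.mem_univ Complex.I)
    simpa [hψdef] using this
  -- conclude: g vanishes near z₀, hence on U
  have hev0 : g =ᶠ[𝓝 z₀] (0 : Fc → Gc) := by
    filter_upwards [Metric.ball_mem_nhds z₀ hρpos] with x hx
    have hmem : x - z₀ ∈ Metric.eball (0 : Fc) (ENNReal.ofReal ρ) := by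
      rw [Metric.mem_eball, edist_zero_right, ← ofReal_norm]
      exact (ENNReal.ofReal_lt_ofReal_iff hρpos).mpr (by simpa [dist_eq_norm] using hx)
    have hsum := hpρ.hasSum hmem
    simp only [hdiag] at hsum
    have : g (z₀ + (x - z₀)) = 0 := hsum.unique hasSum_zero
    simpa using this
  have heq := hg.eqOn_zero_of_preconnected_of_eventuallyEq_zero
    hconn.isPreconnected hz₀U hev0
  intro x hx
  have := heq hx
  simpa [hg_def, sub_eq_zero] using this
end

section
/- Let (E_n)_{n∈ℕ} and (F_n)_{n∈ℕ} be increasing sequences of locally convex (e.g. Banach) spaces with continuous injective bonding maps, whose locally convex direct limits E = ⋃_n E_n and F = ⋃_n F_n are both compactly regular. Then the product E × F with the product topology equals the locally convex direct limit of (E_n × F_n)_{n∈ℕ}, and the sequence (E_n × F_n) is compactly regular. -/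
open Set

open Set

/-- Compact regularity forces the limit to be Hausdorff. -/
lemma aux_t2 {E : Type*} [AddCommGroup E] [Module ℝ E] [TopologicalSpace E]
    [IsTopologicalAddGroup E] [ContinuousSMul ℝ E]
    (En : ℕ → Type*) [∀ n, NormedAddCommGroup (En n)] [∀ n, NormedSpace ℝ (En n)]
    (f : ∀ n, En n →L[ℝ] E)
    (hEreg : ∀ C : Set E, IsCompact C → ∃ n, C ⊆ Set.range (f n) ∧
      IsCompact ((f n) ⁻¹' C)) : T2Space E := by
  set N := closure ({0} : Set E) with hN
  -- every point of N lies in every open set containing 0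
  have hNsub : ∀ z ∈ N, ∀ U : Set E, IsOpen U → (0 : E) ∈ U → z ∈ U := by
    intro z hz U hU h0
    have hneg : -z ∈ N := by
      have := image_closure_subset_closure_image (f := fun w : E => -w) continuous_neg
        ⟨z, hz, rfl⟩
      simpa using this
    have hO : IsOpen {w : E | z + w ∈ U} := hU.preimage (continuous_const.add continuous_id)
    have hmem : -z ∈ {w : E | z + w ∈ U} := by simpa using h0
    rcases mem_closure_iff.mp hneg _ hO hmem with ⟨y, hy1, hy2⟩
    rcases hy2 with rfl
    simpa using hy1
  have hNcomp : IsCompact N := by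
    apply isCompact_of_finite_subcover
    intro ι U hUo hcov
    have h0 : (0 : E) ∈ N := subset_closure rfl
    obtain ⟨i, hi⟩ := mem_iUnion.mp (hcov h0)
    refine ⟨{i}, fun z hz => ?_⟩
    simp only [Finset.mem_singleton, iUnion_iUnion_eq_left]
    exact hNsub z hz (U i) (hUo i) hi
  obtain ⟨n, hsub, hK⟩ := hEreg N hNcomp
  -- the preimage is a compact set stable under scalar multiplication, hence {0}
  have hKzero : (f n) ⁻¹' N ⊆ {0} := by
    intro x hx
    by_contra hx0
    have hxne : x ≠ 0 := fun h => hx0 (by simp [h])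
    obtain ⟨R, hR⟩ := isBounded_iff_forall_norm_le.mp hK.isBounded
    set t : ℝ := (|R| + 1) / ‖x‖ with ht
    have htx : t • x ∈ (f n) ⁻¹' N := by
      have : (f n) (t • x) = t • (f n) x := by simp
      have hsm : t • (f n) x ∈ N := by
        have := image_closure_subset_closure_image (f := fun w : E => t • w)
          (continuous_const.smul continuous_id) ⟨f n x, hx, rfl⟩
        simpa using this
      simpa [this] using hsm
    have := hR _ htx
    rw [norm_smul] at this
    have hxpos : (0 : ℝ) < ‖x‖ := norm_pos_iff.mpr hxne
    have htval : ‖t‖ * ‖x‖ = |R| + 1 := by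
      rw [Real.norm_eq_abs, ht, abs_div, abs_of_nonneg (by positivity : (0:ℝ) ≤ |R| + 1),
        abs_of_pos hxpos, div_mul_cancel₀ _ (ne_of_gt hxpos)]
    rw [htval] at this
    have : |R| + 1 ≤ |R| := le_trans this (le_abs_self R)
    linarith
  have hN0 : N = {0} := by
    apply Subset.antisymm
    · intro z hz
      obtain ⟨x, rfl⟩ := hsub hz
      have : x ∈ (f n) ⁻¹' N := hz
      have := hKzero this
      simp only [mem_singleton_iff] at this
      simp [this]
    · intro z hz
      rcases hz with rfl
      exact subset_closure rfl
  have hcl : IsClosed ({0} : Set E) := by rw [← hN0]; exact isClosed_closure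
  exact IsTopologicalAddGroup.t2Space_iff_zero_closed.mpr hcl


/-- A compactly contained set remains compactly contained at any later step. -/
lemma aux_up {E : Type*} [AddCommGroup E] [Module ℝ E] [TopologicalSpace E]
    [IsTopologicalAddGroup E] [ContinuousSMul ℝ E] [T2Space E]
    (En : ℕ → Type*) [∀ n, NormedAddCommGroup (En n)] [∀ n, NormedSpace ℝ (En n)]
    [∀ n, CompleteSpace (En n)]
    (f : ∀ n, En n →L[ℝ] E) (hfinj : ∀ n, Function.Injective (f n))
    (hfmono : ∀ n, Set.range (f n) ⊆ Set.range (f (n + 1)))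
    (C : Set E) {n m : ℕ} (hnm : n ≤ m) (hCr : C ⊆ Set.range (f n))
    (hCc : IsCompact ((f n) ⁻¹' C)) :
    C ⊆ Set.range (f m) ∧ IsCompact ((f m) ⁻¹' C) := by
  have hr : Set.range (f n) ⊆ Set.range (f m) := by
    induction m, hnm using Nat.le_induction with
    | base => exact Subset.rfl
    | succ k hk ih => exact ih.trans (hfmono k)
  -- the linking map
  have hsp : ∀ x : En n, ∃ y : En m, f m y = f n x := fun x => hr ⟨x, rfl⟩
  choose u hu using hsp
  have huadd : ∀ x y, u (x + y) = u x + u y := by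
    intro x y
    apply hfinj m
    simp [hu, map_add]
  have husmul : ∀ (c : ℝ) (x), u (c • x) = c • u x := by
    intro c x
    apply hfinj m
    simp [hu, map_smul]
  let uL : En n →ₗ[ℝ] En m :=
    { toFun := u, map_add' := huadd, map_smul' := husmul }
  have huL : ∀ x, uL x = u x := fun _ => rfl
  have hgraph : IsClosed (uL.graph : Set (En n × En m)) := by
    have : (uL.graph : Set (En n × En m)) =
        (fun p : En n × En m => f n p.1 - f m p.2) ⁻¹' {0} := by
      ext ⟨x, y⟩
      simp only [SetLike.mem_coe, LinearMap.mem_graph_iff, mem_preimage, mem_singleton_iff,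
        sub_eq_zero]
      constructor
      · rintro rfl
        exact (hu x).symm
      · intro h
        exact hfinj m (by rw [huL, hu x, ← h])
    rw [this]
    exact isClosed_singleton.preimage (((f n).continuous.comp continuous_fst).sub
      ((f m).continuous.comp continuous_snd))
  have hucont : Continuous uL := uL.continuous_of_isClosed_graph hgraph
  have himg : (f m) ⁻¹' C = uL '' ((f n) ⁻¹' C) := by
    ext y
    constructor
    · intro hy
      obtain ⟨x, hx⟩ := hCr hy
      refine ⟨x, by simpa [hx] using hy, ?_⟩
      exact hfinj m (by rw [huL, hu x, hx])
    · rintro ⟨x, hx, rfl⟩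
      simpa [mem_preimage, huL, hu x] using hx
  exact ⟨hCr.trans hr, himg ▸ hCc.image hucont⟩

/-- Products of compactly regular direct limits of Banach spaces: the product of
the limits carries the direct limit topology of the products of the steps, and the
sequence of products is compactly regular. -/
theorem stmt13 {E F : Type*}
    [AddCommGroup E] [Module ℝ E] [TopologicalSpace E] [IsTopologicalAddGroup E]
    [ContinuousSMul ℝ E]
    [AddCommGroup F] [Module ℝ F] [TopologicalSpace F] [IsTopologicalAddGroup F]
    [ContinuousSMul ℝ F]
    (En Fn : ℕ → Type*)
    [∀ n, NormedAddCommGroup (En n)] [∀ n, NormedSpace ℝ (En n)]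
    [∀ n, CompleteSpace (En n)]
    [∀ n, NormedAddCommGroup (Fn n)] [∀ n, NormedSpace ℝ (Fn n)]
    [∀ n, CompleteSpace (Fn n)]
    (f : ∀ n, En n →L[ℝ] E) (g : ∀ n, Fn n →L[ℝ] F)
    (hfinj : ∀ n, Function.Injective (f n)) (hginj : ∀ n, Function.Injective (g n))
    (hfmono : ∀ n, Set.range (f n) ⊆ Set.range (f (n + 1)))
    (hgmono : ∀ n, Set.range (g n) ⊆ Set.range (g (n + 1)))
    (hfunion : (⋃ n, Set.range (f n)) = Set.univ)
    (hgunion : (⋃ n, Set.range (g n)) = Set.univ)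
    -- `E` and `F` carry the locally convex direct limit topologies:
    (hEfinal : ∀ S : Set E, Convex ℝ S →
      (S ∈ nhds (0 : E) ↔ ∀ n, (f n) ⁻¹' S ∈ nhds (0 : En n)))
    (hFfinal : ∀ S : Set F, Convex ℝ S →
      (S ∈ nhds (0 : F) ↔ ∀ n, (g n) ⁻¹' S ∈ nhds (0 : Fn n)))
    -- compact regularity of both limits:
    (hEreg : ∀ C : Set E, IsCompact C → ∃ n, C ⊆ Set.range (f n) ∧
      IsCompact ((f n) ⁻¹' C))
    (hFreg : ∀ C : Set F, IsCompact C → ∃ n, C ⊆ Set.range (g n) ∧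
      IsCompact ((g n) ⁻¹' C)) :
    -- the product topology on `E × F` is the direct limit topology of the products:
    (∀ S : Set (E × F), Convex ℝ S →
      (S ∈ nhds (0 : E × F) ↔
        ∀ n, ((f n).prodMap (g n)) ⁻¹' S ∈ nhds (0 : En n × Fn n))) ∧
    -- and the sequence of products is compactly regular:
    (∀ C : Set (E × F), IsCompact C → ∃ n, C ⊆ Set.range ((f n).prodMap (g n)) ∧
      IsCompact (((f n).prodMap (g n)) ⁻¹' C)) := by
  haveI hT2E : T2Space E := aux_t2 En f hEreg
  haveI hT2F : T2Space F := aux_t2 Fn g hFreg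
  constructor
  · intro S hS
    constructor
    · intro hSnhds n
      have h0 : ((f n).prodMap (g n)) (0 : En n × Fn n) = 0 :=
        map_zero ((f n).prodMap (g n))
      have hc := ((f n).prodMap (g n)).continuous.tendsto (0 : En n × Fn n)
      rw [h0] at hc
      exact hc hSnhds
    · intro h
      set A := {x : E | (x, (0 : F)) ∈ S} with hA
      set B := {y : F | ((0 : E), y) ∈ S} with hB
      have hAconv : Convex ℝ A := by
        intro x hx y hy a b ha hb hab
        have hcomb := hS hx hy ha hb hab
        have : a • ((x, (0 : F)) : E × F) + b • ((y, (0 : F)) : E × F)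
            = (a • x + b • y, (0 : F)) := by
          simp [Prod.ext_iff]
        rwa [this] at hcomb
      have hBconv : Convex ℝ B := by
        intro x hx y hy a b ha hb hab
        have hcomb := hS hx hy ha hb hab
        have : a • (((0 : E), x) : E × F) + b • (((0 : E), y) : E × F)
            = ((0 : E), a • x + b • y) := by
          simp [Prod.ext_iff]
        rwa [this] at hcomb
      have hAn : A ∈ nhds (0 : E) := by
        refine (hEfinal A hAconv).mpr fun n => ?_
        have hcont : Continuous (fun x : En n => (x, (0 : Fn n))) :=
          continuous_id.prodMk continuous_const
        have hc := hcont.tendsto 0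
        have hm := Filter.mem_map.mp (hc (h n))
        have heq : (fun x : En n => (x, (0 : Fn n))) ⁻¹' (((f n).prodMap (g n)) ⁻¹' S)
            = (f n) ⁻¹' A := by
          ext x
          simp [hA]
        rwa [heq] at hm
      have hBn : B ∈ nhds (0 : F) := by
        refine (hFfinal B hBconv).mpr fun n => ?_
        have hcont : Continuous (fun y : Fn n => ((0 : En n), y)) :=
          continuous_const.prodMk continuous_id
        have hc := hcont.tendsto 0
        have hm := Filter.mem_map.mp (hc (h n))
        have heq : (fun y : Fn n => ((0 : En n), y)) ⁻¹' (((f n).prodMap (g n)) ⁻¹' S)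
            = (g n) ⁻¹' B := by
          ext y
          simp [hB]
        rwa [heq] at hm
      have hA2 : (fun x : E => (2 : ℝ) • x) ⁻¹' A ∈ nhds (0 : E) := by
        have hc : Continuous fun x : E => (2 : ℝ) • x := continuous_const.smul continuous_id
        have := hc.tendsto 0
        rw [smul_zero] at this
        exact this hAn
      have hB2 : (fun y : F => (2 : ℝ) • y) ⁻¹' B ∈ nhds (0 : F) := by
        have hc : Continuous fun y : F => (2 : ℝ) • y := continuous_const.smul continuous_id
        have := hc.tendsto 0
        rw [smul_zero] at this
        exact this hBn
      have hsub : ((fun x : E => (2 : ℝ) • x) ⁻¹' A) ×ˢ ((fun y : F => (2 : ℝ) • y) ⁻¹' B)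
          ⊆ S := by
        rintro ⟨x, y⟩ ⟨hx, hy⟩
        have hx' : (((2 : ℝ) • x, (0 : F)) : E × F) ∈ S := hx
        have hy' : ((((0 : E), (2 : ℝ) • y)) : E × F) ∈ S := hy
        have hcomb := hS hx' hy' (by norm_num : (0:ℝ) ≤ 1/2) (by norm_num : (0:ℝ) ≤ 1/2)
          (by norm_num : (1/2 : ℝ) + 1/2 = 1)
        have heq : (1/2 : ℝ) • (((2 : ℝ) • x, (0 : F)) : E × F)
            + (1/2 : ℝ) • ((((0 : E), (2 : ℝ) • y)) : E × F) = (x, y) := by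
          simp [Prod.ext_iff, smul_smul]
        rwa [heq] at hcomb
      have h00 : (0 : E × F) = ((0 : E), (0 : F)) := rfl
      rw [h00]
      exact Filter.mem_of_superset (prod_mem_nhds hA2 hB2) hsub
  · intro C hC
    have hC1 : IsCompact (Prod.fst '' C) := hC.image continuous_fst
    have hC2 : IsCompact (Prod.snd '' C) := hC.image continuous_snd
    obtain ⟨n1, hr1, hk1⟩ := hEreg _ hC1
    obtain ⟨n2, hr2, hk2⟩ := hFreg _ hC2
    obtain ⟨hr1', hk1'⟩ := aux_up En f hfinj hfmono _ (le_max_left n1 n2) hr1 hk1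
    obtain ⟨hr2', hk2'⟩ := aux_up Fn g hginj hgmono _ (le_max_right n1 n2) hr2 hk2
    set n := max n1 n2
    refine ⟨n, ?_, ?_⟩
    · rintro ⟨x, y⟩ hxy
      obtain ⟨a, ha⟩ := hr1' ⟨(x, y), hxy, rfl⟩
      obtain ⟨b, hb⟩ := hr2' ⟨(x, y), hxy, rfl⟩
      exact ⟨(a, b), by simp [ha, hb]⟩
    · have hclosed : IsClosed C := hC.isClosed
      have hsub : ((f n).prodMap (g n)) ⁻¹' C ⊆
          ((f n) ⁻¹' (Prod.fst '' C)) ×ˢ ((g n) ⁻¹' (Prod.snd '' C)) := by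
        rintro ⟨a, b⟩ hab
        exact ⟨⟨(f n a, g n b), hab, rfl⟩, ⟨(f n a, g n b), hab, rfl⟩⟩
      exact (hk1'.prod hk2').of_isClosed_subset
        (hclosed.preimage ((f n).prodMap (g n)).continuous) hsub
end

section
/- Let (E_n) and (F_n) be sequences of locally convex spaces with continuous bonding maps E_n → E_{n+1}, F_n → F_{n+1}, and topological embeddings τ_n : E_n → F_n making all squares commute. Assume E_m ∩ τ⁻¹_n(F_n) ⊆ E_n for all m, n ∈ ℕ (where intersections are taken inside the direct limits), and that (F_n) is compactly regular. Then (E_n) is compactly regular: every compact subset of the direct limit ⋃_n E_n lies in and is compact in some E_n. -/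
/-- Compact regularity passes to a compatible sequence of topologically embedded
steps: if `τₙ : Eₙ → Fₙ` are topological embeddings compatible with the inclusions
into the limits, `E_m ∩ τ⁻¹(Fₙ) ⊆ Eₙ` inside the limits, and `(Fₙ)` is compactly
regular, then `(Eₙ)` is compactly regular. -/
theorem stmt14 {E F : Type*}
    [AddCommGroup E] [Module ℝ E] [TopologicalSpace E] [IsTopologicalAddGroup E]
    [ContinuousSMul ℝ E]
    [AddCommGroup F] [Module ℝ F] [TopologicalSpace F] [IsTopologicalAddGroup F]
    [ContinuousSMul ℝ F]
    (En Fn : ℕ → Type*)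
    [∀ n, AddCommGroup (En n)] [∀ n, Module ℝ (En n)] [∀ n, TopologicalSpace (En n)]
    [∀ n, AddCommGroup (Fn n)] [∀ n, Module ℝ (Fn n)] [∀ n, TopologicalSpace (Fn n)]
    (eE : ∀ n, En n →L[ℝ] E) (eF : ∀ n, Fn n →L[ℝ] F)
    (hEinj : ∀ n, Function.Injective (eE n)) (hFinj : ∀ n, Function.Injective (eF n))
    (hEmono : ∀ n, Set.range (eE n) ⊆ Set.range (eE (n + 1)))
    (hFmono : ∀ n, Set.range (eF n) ⊆ Set.range (eF (n + 1)))
    (hEunion : (⋃ n, Set.range (eE n)) = Set.univ)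
    (τ : E →L[ℝ] F) (τn : ∀ n, En n →L[ℝ] Fn n)
    (hemb : ∀ n, Topology.IsEmbedding (τn n))
    (hcomm : ∀ n (x : En n), eF n (τn n x) = τ (eE n x))
    -- `E_m ∩ τ⁻¹(F_n) ⊆ E_n` inside the direct limits:
    (hcap : ∀ m n, Set.range (eE m) ∩ τ ⁻¹' (Set.range (eF n)) ⊆ Set.range (eE n))
    -- `(Fₙ)` is compactly regular:
    (hFreg : ∀ C : Set F, IsCompact C → ∃ n, C ⊆ Set.range (eF n) ∧
      IsCompact ((eF n) ⁻¹' C)) :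
    ∀ C : Set E, IsCompact C → ∃ n, C ⊆ Set.range (eE n) ∧
      IsCompact ((eE n) ⁻¹' C) := by
  intro C hC
  obtain ⟨n, hsub, hKcomp⟩ := hFreg (τ '' C) (hC.image τ.continuous)
  have hCsub : C ⊆ Set.range (eE n) := by
    intro c hc
    have hm : ∃ m, c ∈ Set.range (eE m) := by
      have : c ∈ ⋃ m, Set.range (eE m) := by rw [hEunion]; trivial
      simpa using this
    obtain ⟨m, hcm⟩ := hm
    exact hcap m n ⟨hcm, hsub ⟨c, hc, rfl⟩⟩
  refine ⟨n, hCsub, ?_⟩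
  have himg : τn n '' ((eE n) ⁻¹' C) = (eF n) ⁻¹' (τ '' C) := by
    ext y
    constructor
    · rintro ⟨x, hx, rfl⟩
      exact ⟨eE n x, hx, (hcomm n x).symm⟩
    · rintro ⟨c, hc, hy⟩
      obtain ⟨x, rfl⟩ := hCsub hc
      have : τn n x = y := hFinj n (by rw [hcomm n x, hy])
      exact ⟨x, hc, this⟩
  rw [(hemb n).isCompact_iff, himg]
  exact hKcomp
end

section
/- Let E = ⋃_n E_n be a compactly regular locally convex direct limit of complex Banach spaces which are closed under a common continuous bilinear bracket: each E_n = BHol(U_n, 𝔥) for a Banach–Lie algebra 𝔥 with pointwise bracket satisfying ‖[γ, η]‖_∞ ≤ C‖γ‖_∞‖η‖_∞ on each step. Then the pointwise bracket on E is continuous, making E a locally convex topological Lie algebra. -/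
open Filter Set Metric Topology

namespace Stmt19Aux

variable {E : Type*} [AddCommGroup E] [Module ℂ E] [TopologicalSpace E]
    [IsTopologicalAddGroup E] [ContinuousSMul ℂ E]
    {En : ℕ → Type*} [∀ n, NormedAddCommGroup (En n)] [∀ n, NormedSpace ℂ (En n)]

/-- Bounded lifting from step `j` to step `k`. -/
def Good (f : ∀ n, En n →L[ℂ] E) (j k : ℕ) : Prop :=
  ∃ c : ℝ, 0 ≤ c ∧ ∀ x : En j, ∃ z : En k, f k z = f j x ∧ ‖z‖ ≤ c * ‖x‖

theorem exists_bad_vec {f : ∀ n, En n →L[ℂ] E} {j k : ℕ} (h : ¬ Good f j k)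
    (c r : ℝ) (hc : 0 ≤ c) (hr : 0 < r) :
    ∃ u : En j, ‖u‖ ≤ r ∧ ∀ z : En k, f k z = f j u → c < ‖z‖ := by
  unfold Good at h
  push_neg at h
  obtain ⟨x, hx⟩ := h (c / r) (by positivity)
  have hx0 : x ≠ 0 := by
    rintro rfl
    have := hx 0 (by simp)
    rw [norm_zero, norm_zero, mul_zero] at this
    exact lt_irrefl 0 this
  have hxn : (0 : ℝ) < ‖x‖ := norm_pos_iff.mpr hx0
  refine ⟨((r / ‖x‖ : ℝ) : ℂ) • x, ?_, ?_⟩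
  · rw [norm_smul, Complex.norm_real, Real.norm_eq_abs, abs_of_pos (by positivity),
      div_mul_cancel₀ _ hxn.ne']
  · intro z hz
    have hz' : f k (((‖x‖ / r : ℝ) : ℂ) • z) = f j x := by
      have hcoef : ((‖x‖ / r : ℝ) : ℂ) • ((r / ‖x‖ : ℝ) : ℂ) • x = x := by
        rw [smul_smul, ← Complex.ofReal_mul,
          show (‖x‖ / r) * (r / ‖x‖) = 1 from by field_simp]
        simp
      rw [map_smul, hz, ← map_smul, hcoef]
    have hlt := hx _ hz'
    rw [norm_smul, Complex.norm_real, Real.norm_eq_abs, abs_of_pos (by positivity)] at hlt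
    have h1 : c / r * ‖x‖ = ‖x‖ / r * c := by ring
    rw [h1] at hlt
    exact (mul_lt_mul_iff_right₀ (by positivity)).mp hlt

theorem key {f : ∀ n, En n →L[ℂ] E}
    (hreg : ∀ Cmp : Set E, IsCompact Cmp → ∃ n, Cmp ⊆ Set.range (f n) ∧
      IsCompact ((f n) ⁻¹' Cmp)) (a b : ℕ) :
    ∃ k, ∃ c : ℝ, 0 ≤ c ∧ (∀ x : En a, ∃ z : En k, f k z = f a x ∧ ‖z‖ ≤ c * ‖x‖) ∧
      (∀ y : En b, ∃ z : En k, f k z = f b y ∧ ‖z‖ ≤ c * ‖y‖) := by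
  classical
  by_contra hcon
  have hbad : ∀ k, ¬ Good f a k ∨ ¬ Good f b k := by
    intro k
    by_contra hk
    push_neg at hk
    obtain ⟨⟨c1, hc1, hA⟩, ⟨c2, hc2, hB⟩⟩ := hk
    exact hcon ⟨k, max c1 c2, le_trans hc1 (le_max_left _ _),
      fun x => (hA x).imp (fun z hz => ⟨hz.1, hz.2.trans
        (mul_le_mul_of_nonneg_right (le_max_left _ _) (norm_nonneg _))⟩),
      fun y => (hB y).imp (fun z hz => ⟨hz.1, hz.2.trans
        (mul_le_mul_of_nonneg_right (le_max_right _ _) (norm_nonneg _))⟩)⟩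
  set g : ℕ × ℕ → ℝ := fun p => (2 : ℝ)⁻¹ ^ (p.1 + p.2) with hg
  have hgpos : ∀ p : ℕ × ℕ, 0 < g p := fun p => by positivity
  have hgt : Tendsto g cofinite (𝓝 0) := by
    have hsum : Tendsto (fun p : ℕ × ℕ => p.1 + p.2) cofinite atTop := by
      rw [Filter.tendsto_atTop]
      intro n
      rw [Filter.eventually_cofinite]
      apply Set.Finite.subset ((Set.finite_Iio n).prod (Set.finite_Iio n))
      intro p hp
      simp only [Set.mem_setOf_eq, not_le] at hp
      simp only [Set.mem_prod, Set.mem_Iio]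
      exact ⟨lt_of_le_of_lt (Nat.le_add_right _ _) hp, lt_of_le_of_lt (Nat.le_add_left _ _) hp⟩
    exact (tendsto_pow_atTop_nhds_zero_of_lt_one (r := (2:ℝ)⁻¹) (by norm_num) (by norm_num)).comp hsum
  have mkSeq : ∀ (j : ℕ), ∃ u : ℕ × ℕ → En j,
      (∀ p, ‖u p‖ ≤ g p) ∧
      (∀ p : ℕ × ℕ, ¬ Good f j p.1 → ∀ z : En p.1, f p.1 z = f j (u p) → (p.2 : ℝ) < ‖z‖) := by
    intro j
    have h : ∀ p : ℕ × ℕ, ∃ u : En j, ‖u‖ ≤ g p ∧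
        (¬ Good f j p.1 → ∀ z : En p.1, f p.1 z = f j u → (p.2 : ℝ) < ‖z‖) := by
      intro p
      by_cases hp : Good f j p.1
      · exact ⟨0, by simp [le_of_lt (hgpos p)], fun h' => absurd hp h'⟩
      · obtain ⟨u, hu1, hu2⟩ := exists_bad_vec hp (p.2) (g p) (Nat.cast_nonneg _) (hgpos p)
        exact ⟨u, hu1, fun _ => hu2⟩
    choose u h1 h2 using h
    exact ⟨u, h1, h2⟩
  obtain ⟨ua, hua1, hua2⟩ := mkSeq a
  obtain ⟨ub, hub1, hub2⟩ := mkSeq b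
  have hKa : IsCompact (insert (0 : En a) (Set.range ua)) :=
    (squeeze_zero_norm hua1 hgt).isCompact_insert_range_of_cofinite
  have hKb : IsCompact (insert (0 : En b) (Set.range ub)) :=
    (squeeze_zero_norm hub1 hgt).isCompact_insert_range_of_cofinite
  set K : Set E := (f a '' insert 0 (Set.range ua)) ∪ (f b '' insert 0 (Set.range ub)) with hK
  have hKc : IsCompact K := (hKa.image (f a).continuous).union (hKb.image (f b).continuous)
  obtain ⟨N, hsub, hcomp⟩ := hreg K hKc
  obtain ⟨M, hM⟩ : ∃ M : ℝ, ∀ z ∈ (f N) ⁻¹' K, ‖z‖ ≤ M :=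
    isBounded_iff_forall_norm_le.mp hcomp.isBounded
  have hfl : M < (⌊M⌋₊ + 1 : ℝ) := Nat.lt_floor_add_one M
  rcases hbad N with hN | hN
  · have hmem : f a (ua (N, ⌊M⌋₊ + 1)) ∈ K := Or.inl ⟨ua (N, ⌊M⌋₊ + 1), Or.inr ⟨(N, ⌊M⌋₊ + 1), rfl⟩, rfl⟩
    obtain ⟨z, hz⟩ := hsub hmem
    have hzK : z ∈ (f N) ⁻¹' K := by rw [Set.mem_preimage, hz]; exact hmem
    have h1 : ((⌊M⌋₊ + 1 : ℕ) : ℝ) < ‖z‖ := hua2 (N, ⌊M⌋₊ + 1) hN z hz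
    have h2 : ‖z‖ ≤ M := hM z hzK
    push_cast at h1
    linarith
  · have hmem : f b (ub (N, ⌊M⌋₊ + 1)) ∈ K := Or.inr ⟨ub (N, ⌊M⌋₊ + 1), Or.inr ⟨(N, ⌊M⌋₊ + 1), rfl⟩, rfl⟩
    obtain ⟨z, hz⟩ := hsub hmem
    have hzK : z ∈ (f N) ⁻¹' K := by rw [Set.mem_preimage, hz]; exact hmem
    have h1 : ((⌊M⌋₊ + 1 : ℕ) : ℝ) < ‖z‖ := hub2 (N, ⌊M⌋₊ + 1) hN z hz
    have h2 : ‖z‖ ≤ M := hM z hzK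
    push_cast at h1
    linarith


theorem aux_lt {x δ : ℝ} (hx : 0 ≤ x) (hδ : 0 < δ) : x * (δ / (1 + x)) < δ := by
  have h1 : 0 < 1 + x := by linarith
  rw [← mul_div_assoc, div_lt_iff₀ h1]
  nlinarith

theorem real_smul [Module ℝ E] [IsScalarTower ℝ ℂ E] (r : ℝ) (v : E) :
    r • v = ((r : ℂ)) • v := by
  rw [← algebraMap_smul ℂ r v, Complex.coe_algebraMap]

theorem convex_transfer [Module ℝ E] [IsScalarTower ℝ ℂ E] {s : Set E}
    (h : @Convex ℝ E _ _ _ (@SemigroupAction.toSMul ℝ E _ (@MulAction.toSemigroupAction ℝ E _ (@DistribMulAction.toMulAction ℝ E _ _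
      (@Module.toDistribMulAction ℝ E _ _ (Module.complexToReal E))))) s) :
    Convex ℝ s := by
  intro x hx y hy a b ha hb hab
  have h2 := h hx hy ha hb hab
  rw [← Complex.coe_smul, ← Complex.coe_smul] at h2
  rw [real_smul a x, real_smul b y]
  exact h2

theorem mkNhd [Module ℝ E] [IsScalarTower ℝ ℂ E] {f : ∀ n, En n →L[ℂ] E}
    (hfinal : ∀ S : Set E, Convex ℝ S →
      (S ∈ nhds (0 : E) ↔ ∀ n, (f n) ⁻¹' S ∈ nhds (0 : En n)))
    (ε : ℕ → ℝ) (hε : ∀ n, 0 < ε n) :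
    convexHull ℝ (⋃ n, f n '' Metric.ball 0 (ε n)) ∈ nhds (0 : E) := by
  rw [hfinal _ (convex_convexHull ℝ _)]
  intro n
  apply Filter.mem_of_superset (Metric.ball_mem_nhds 0 (hε n))
  intro x hx
  exact subset_convexHull ℝ _ (Set.mem_iUnion.mpr ⟨n, Set.mem_image_of_mem _ hx⟩)

theorem hull_bracket [Module ℝ E] [IsScalarTower ℝ ℂ E] (B : E →ₗ[ℂ] E →ₗ[ℂ] E)
    {W' : Set E} (hW' : Convex ℝ W') {S1 S2 : Set E}
    (h : ∀ s ∈ S1, ∀ t ∈ S2, B s t ∈ W') :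
    ∀ x ∈ convexHull ℝ S1, ∀ y ∈ convexHull ℝ S2, B x y ∈ W' := by
  have step1 : ∀ t ∈ S2, ∀ x ∈ convexHull ℝ S1, B x t ∈ W' := by
    intro t ht
    have hsub : convexHull ℝ S1 ⊆ {x | B x t ∈ W'} := by
      apply convexHull_min (fun s hs => h s hs t ht)
      intro x1 hx1 x2 hx2 p q hp hq hpq
      have heq : B (p • x1 + q • x2) t = p • B x1 t + q • B x2 t := by
        rw [real_smul p x1, real_smul q x2, map_add, LinearMap.add_apply, map_smul, map_smul,
          LinearMap.smul_apply, LinearMap.smul_apply, ← real_smul, ← real_smul]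
      show B (p • x1 + q • x2) t ∈ W'
      rw [heq]
      exact hW' hx1 hx2 hp hq hpq
    exact fun x hx => hsub hx
  intro x hx y hy
  have hsub : convexHull ℝ S2 ⊆ {y | B x y ∈ W'} := by
    apply convexHull_min (fun t ht => step1 t ht x hx)
    intro y1 hy1 y2 hy2 p q hp hq hpq
    have heq : B x (p • y1 + q • y2) = p • B x y1 + q • B x y2 := by
      rw [real_smul p y1, real_smul q y2, map_add, map_smul, map_smul, ← real_smul, ← real_smul]
    show B x (p • y1 + q • y2) ∈ W'
    rw [heq]
    exact hW' hy1 hy2 hp hq hpq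
  exact hsub hy

theorem zero_cont [Module ℝ E] [IsScalarTower ℝ ℂ E] {f : ∀ n, En n →L[ℂ] E}
    (hfinal : ∀ S : Set E, Convex ℝ S →
      (S ∈ nhds (0 : E) ↔ ∀ n, (f n) ⁻¹' S ∈ nhds (0 : En n)))
    (hreg : ∀ Cmp : Set E, IsCompact Cmp → ∃ n, Cmp ⊆ Set.range (f n) ∧
      IsCompact ((f n) ⁻¹' Cmp))
    (B : E →ₗ[ℂ] E →ₗ[ℂ] E) (Bn : ∀ n, En n →ₗ[ℂ] En n →ₗ[ℂ] En n)
    {C : ℝ} (hC : 0 ≤ C)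
    (hbound : ∀ n (x y : En n), ‖Bn n x y‖ ≤ C * ‖x‖ * ‖y‖)
    (hstep : ∀ n (x y : En n), f n (Bn n x y) = B (f n x) (f n y))
    {W' : Set E} (hW'c : Convex ℝ W') (hW' : W' ∈ nhds (0 : E)) :
    ∃ V ∈ nhds (0 : E), ∀ x ∈ V, ∀ y ∈ V, B x y ∈ W' := by
  classical
  choose k c hc hlA hlB using fun a b => key (f := f) hreg a b
  have hδex : ∀ a b : ℕ, ∃ δ : ℝ, 0 < δ ∧ ∀ z : En (k a b), ‖z‖ < δ → f (k a b) z ∈ W' := by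
    intro a b
    have hmem : (f (k a b)) ⁻¹' W' ∈ nhds (0 : En (k a b)) :=
      (f (k a b)).continuous.continuousAt.preimage_mem_nhds (by rw [map_zero]; exact hW')
    rcases Metric.mem_nhds_iff.mp hmem with ⟨δ, hδ, hball⟩
    exact ⟨δ, hδ, fun z hz => hball (mem_ball_zero_iff.mpr hz)⟩
  choose δ hδpos hδ using hδex
  have hCc : ∀ a b, (0:ℝ) ≤ C * (c a b)^2 := fun a b => mul_nonneg hC (sq_nonneg _)
  have hden : ∀ a b, (0:ℝ) < 1 + C * (c a b)^2 := fun a b => by have := hCc a b; linarith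
  set d : ℕ → ℕ → ℝ := fun a b => min 1 (δ a b / (1 + C * (c a b)^2)) with hd
  have hdpos : ∀ a b, 0 < d a b := fun a b =>
    lt_min one_pos (div_pos (hδpos a b) (hden a b))
  have hd1 : ∀ a b, d a b ≤ 1 := fun a b => min_le_left _ _
  set ε : ℕ → ℝ := fun n => (Finset.range (n+1)).inf'
    ⟨0, Finset.mem_range.mpr (Nat.succ_pos n)⟩ (fun j => min (d j n) (d n j)) with hε
  have hεpos : ∀ n, 0 < ε n := by
    intro n
    exact (Finset.lt_inf'_iff _).mpr fun j _ => lt_min (hdpos j n) (hdpos n j)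
  have hεone : ∀ n, ε n ≤ 1 := by
    intro n
    exact le_trans (Finset.inf'_le _ (Finset.mem_range.mpr (Nat.lt_succ_of_le le_rfl)))
      (le_trans (min_le_left _ _) (hd1 n n))
  have hεle : ∀ a b, ε a * ε b ≤ d a b := by
    intro a b
    rcases le_total a b with hab | hab
    · have h2 : ε b ≤ d a b :=
        le_trans (Finset.inf'_le _ (Finset.mem_range.mpr (Nat.lt_succ_of_le hab)))
          (min_le_left _ _)
      calc ε a * ε b ≤ 1 * d a b :=
            mul_le_mul (hεone a) h2 (le_of_lt (hεpos b)) zero_le_one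
        _ = d a b := one_mul _
    · have h2 : ε a ≤ d a b :=
        le_trans (Finset.inf'_le _ (Finset.mem_range.mpr (Nat.lt_succ_of_le hab)))
          (min_le_right _ _)
      calc ε a * ε b ≤ d a b * 1 :=
            mul_le_mul h2 (hεone b) (le_of_lt (hεpos b)) (le_of_lt (hdpos a b))
        _ = d a b := mul_one _
  refine ⟨convexHull ℝ (⋃ n, f n '' Metric.ball 0 (ε n)), mkNhd hfinal ε hεpos, ?_⟩
  apply hull_bracket B hW'c
  rintro s hs t ht
  rw [Set.mem_iUnion] at hs ht
  obtain ⟨a, x, hx, rfl⟩ := hs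
  obtain ⟨b, y, hy, rfl⟩ := ht
  obtain ⟨z1, hz1, hn1⟩ := hlA a b x
  obtain ⟨z2, hz2, hn2⟩ := hlB a b y
  rw [← hz1, ← hz2, ← hstep]
  apply hδ a b
  rw [mem_ball_zero_iff] at hx hy
  calc ‖Bn (k a b) z1 z2‖ ≤ C * ‖z1‖ * ‖z2‖ := hbound _ _ _
    _ ≤ C * (c a b * ‖x‖) * (c a b * ‖y‖) := by
        apply mul_le_mul _ hn2 (norm_nonneg _) (mul_nonneg hC (mul_nonneg (hc a b) (norm_nonneg _)))
        exact mul_le_mul_of_nonneg_left hn1 hC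
    _ = (C * (c a b)^2) * (‖x‖ * ‖y‖) := by ring
    _ ≤ (C * (c a b)^2) * (ε a * ε b) := by
        apply mul_le_mul_of_nonneg_left _ (hCc a b)
        exact mul_le_mul (le_of_lt hx) (le_of_lt hy) (norm_nonneg _) (le_of_lt (hεpos a))
    _ ≤ (C * (c a b)^2) * d a b := mul_le_mul_of_nonneg_left (hεle a b) (hCc a b)
    _ ≤ (C * (c a b)^2) * (δ a b / (1 + C * (c a b)^2)) :=
        mul_le_mul_of_nonneg_left (min_le_right _ _) (hCc a b)
    _ < δ a b := aux_lt (hCc a b) (hδpos a b)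

theorem half_cont [Module ℝ E] [IsScalarTower ℝ ℂ E] {f : ∀ n, En n →L[ℂ] E}
    (hfinal : ∀ S : Set E, Convex ℝ S →
      (S ∈ nhds (0 : E) ↔ ∀ n, (f n) ⁻¹' S ∈ nhds (0 : En n)))
    (hreg : ∀ Cmp : Set E, IsCompact Cmp → ∃ n, Cmp ⊆ Set.range (f n) ∧
      IsCompact ((f n) ⁻¹' Cmp))
    (B : E →ₗ[ℂ] E →ₗ[ℂ] E) (Bn : ∀ n, En n →ₗ[ℂ] En n →ₗ[ℂ] En n)
    {C : ℝ} (hC : 0 ≤ C)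
    (hbound : ∀ n (x y : En n), ‖Bn n x y‖ ≤ C * ‖x‖ * ‖y‖)
    (hstep : ∀ n (x y : En n), f n (Bn n x y) = B (f n x) (f n y))
    (b : ℕ) (yb : En b) {W' : Set E} (hW'c : Convex ℝ W') (hW' : W' ∈ nhds (0 : E)) :
    ∃ V ∈ nhds (0 : E), ∀ x ∈ V, B x (f b yb) ∈ W' := by
  classical
  choose k c hc hlA hlB using fun a => key (f := f) hreg a b
  have hδex : ∀ a : ℕ, ∃ δ : ℝ, 0 < δ ∧ ∀ z : En (k a), ‖z‖ < δ → f (k a) z ∈ W' := by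
    intro a
    have hmem : (f (k a)) ⁻¹' W' ∈ nhds (0 : En (k a)) :=
      (f (k a)).continuous.continuousAt.preimage_mem_nhds (by rw [map_zero]; exact hW')
    rcases Metric.mem_nhds_iff.mp hmem with ⟨δ, hδ, hball⟩
    exact ⟨δ, hδ, fun z hz => hball (mem_ball_zero_iff.mpr hz)⟩
  choose δ hδpos hδ using hδex
  have hCc : ∀ a, (0:ℝ) ≤ C * (c a)^2 * ‖yb‖ :=
    fun a => mul_nonneg (mul_nonneg hC (sq_nonneg _)) (norm_nonneg _)
  have hden : ∀ a, (0:ℝ) < 1 + C * (c a)^2 * ‖yb‖ := fun a => by have := hCc a; linarith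
  set ε : ℕ → ℝ := fun a => δ a / (1 + C * (c a)^2 * ‖yb‖) with hε
  have hεpos : ∀ a, 0 < ε a := fun a => div_pos (hδpos a) (hden a)
  refine ⟨convexHull ℝ (⋃ n, f n '' Metric.ball 0 (ε n)), mkNhd hfinal ε hεpos, ?_⟩
  intro x hx
  refine hull_bracket B hW'c (S2 := {f b yb}) ?_ x hx (f b yb)
    (subset_convexHull ℝ _ (Set.mem_singleton _))
  rintro s hs t ht
  rw [Set.mem_singleton_iff] at ht
  subst ht
  rw [Set.mem_iUnion] at hs
  obtain ⟨a, x', hx', rfl⟩ := hs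
  obtain ⟨z1, hz1, hn1⟩ := hlA a x'
  obtain ⟨z2, hz2, hn2⟩ := hlB a yb
  rw [← hz1, ← hz2, ← hstep]
  apply hδ a
  rw [mem_ball_zero_iff] at hx'
  calc ‖Bn (k a) z1 z2‖ ≤ C * ‖z1‖ * ‖z2‖ := hbound _ _ _
    _ ≤ C * (c a * ‖x'‖) * (c a * ‖yb‖) := by
        apply mul_le_mul _ hn2 (norm_nonneg _) (mul_nonneg hC (mul_nonneg (hc a) (norm_nonneg _)))
        exact mul_le_mul_of_nonneg_left hn1 hC
    _ = (C * (c a)^2 * ‖yb‖) * ‖x'‖ := by ring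
    _ ≤ (C * (c a)^2 * ‖yb‖) * (δ a / (1 + C * (c a)^2 * ‖yb‖)) :=
        mul_le_mul_of_nonneg_left (le_of_lt hx') (hCc a)
    _ < δ a := aux_lt (hCc a) (hδpos a)

end Stmt19Aux

/-- On a compactly regular locally convex direct limit `E = ⋃ₙ Eₙ` of Banach
spaces each of which is closed under a common bilinear bracket bounded by `C` on
each step (as for `Eₙ = BHol(Uₙ, 𝔥)` with the pointwise bracket), the bracket of
the limit is continuous, making `E` a locally convex topological Lie algebra. -/
theorem stmt19 {E : Type*} [AddCommGroup E] [Module ℂ E] [TopologicalSpace E]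
    [IsTopologicalAddGroup E] [ContinuousSMul ℂ E] [LocallyConvexSpace ℝ E]
    [Module ℝ E] [IsScalarTower ℝ ℂ E]
    (En : ℕ → Type*) [∀ n, NormedAddCommGroup (En n)] [∀ n, NormedSpace ℂ (En n)]
    [∀ n, CompleteSpace (En n)]
    (f : ∀ n, En n →L[ℂ] E) (hinj : ∀ n, Function.Injective (f n))
    (hmono : ∀ n, Set.range (f n) ⊆ Set.range (f (n + 1)))
    (hunion : (⋃ n, Set.range (f n)) = Set.univ)
    -- the direct limit topology (finality among convex sets):
    (hfinal : ∀ S : Set E, Convex ℝ S →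
      (S ∈ nhds (0 : E) ↔ ∀ n, (f n) ⁻¹' S ∈ nhds (0 : En n)))
    -- compact regularity:
    (hreg : ∀ Cmp : Set E, IsCompact Cmp → ∃ n, Cmp ⊆ Set.range (f n) ∧
      IsCompact ((f n) ⁻¹' Cmp))
    -- the bracket on `E` and its restrictions to the steps:
    (B : E →ₗ[ℂ] E →ₗ[ℂ] E) (Bn : ∀ n, En n →ₗ[ℂ] En n →ₗ[ℂ] En n)
    {C : ℝ} (hC : 0 ≤ C)
    (hbound : ∀ n (x y : En n), ‖Bn n x y‖ ≤ C * ‖x‖ * ‖y‖)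
    (hstep : ∀ n (x y : En n), f n (Bn n x y) = B (f n x) (f n y)) :
    Continuous (fun p : E × E => B p.1 p.2) := by
  classical
  have hbound' : ∀ n (x y : En n), ‖(Bn n).flip x y‖ ≤ C * ‖x‖ * ‖y‖ := by
    intro n x y
    rw [LinearMap.flip_apply]
    calc ‖Bn n y x‖ ≤ C * ‖y‖ * ‖x‖ := hbound n y x
      _ = C * ‖x‖ * ‖y‖ := by ring
  have hstep' : ∀ n (x y : En n), f n ((Bn n).flip x y) = B.flip (f n x) (f n y) := by
    intro n x y
    rw [LinearMap.flip_apply, LinearMap.flip_apply, hstep n y x]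
  rw [continuous_iff_continuousAt]
  rintro ⟨x0, y0⟩
  have hx0 : x0 ∈ ⋃ n, Set.range (f n) := by rw [hunion]; exact Set.mem_univ _
  have hy0 : y0 ∈ ⋃ n, Set.range (f n) := by rw [hunion]; exact Set.mem_univ _
  rw [Set.mem_iUnion] at hx0 hy0
  obtain ⟨a0, xa, rfl⟩ := hx0
  obtain ⟨b0, yb, rfl⟩ := hy0
  have basis := @LocallyConvexSpace.convex_basis_zero ℝ E _ _ _ (Module.complexToReal E) _ _
  have t1 : Filter.Tendsto (fun p : E × E => p.1 - f a0 xa)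
      (nhds (f a0 xa, f b0 yb)) (nhds 0) := by
    have h := (Continuous.tendsto (show Continuous (fun p : E × E => p.1 - f a0 xa) from
      continuous_fst.sub continuous_const) ((f a0 xa, f b0 yb)))
    simpa using h
  have t2 : Filter.Tendsto (fun p : E × E => p.2 - f b0 yb)
      (nhds (f a0 xa, f b0 yb)) (nhds 0) := by
    have h := (Continuous.tendsto (show Continuous (fun p : E × E => p.2 - f b0 yb) from
      continuous_snd.sub continuous_const) ((f a0 xa, f b0 yb)))
    simpa using h
  have h1 : Filter.Tendsto (fun p : E × E => B (p.1 - f a0 xa) (p.2 - f b0 yb))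
      (nhds (f a0 xa, f b0 yb)) (nhds 0) := by
    rw [Filter.tendsto_def]
    intro W hW
    obtain ⟨W', ⟨hW'm, hW'c0⟩, hW's⟩ := basis.mem_iff.mp hW
    have hW'c := Stmt19Aux.convex_transfer hW'c0
    obtain ⟨V, hVm, hVp⟩ := Stmt19Aux.zero_cont hfinal hreg B Bn hC hbound hstep hW'c hW'm
    have m1 := t1 hVm
    have m2 := t2 hVm
    rw [Filter.mem_map] at m1 m2
    apply Filter.mem_of_superset (Filter.inter_mem m1 m2)
    rintro p ⟨hp1, hp2⟩
    exact hW's (hVp _ hp1 _ hp2)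
  have h2 : Filter.Tendsto (fun p : E × E => B (p.1 - f a0 xa) (f b0 yb))
      (nhds (f a0 xa, f b0 yb)) (nhds 0) := by
    rw [Filter.tendsto_def]
    intro W hW
    obtain ⟨W', ⟨hW'm, hW'c0⟩, hW's⟩ := basis.mem_iff.mp hW
    have hW'c := Stmt19Aux.convex_transfer hW'c0
    obtain ⟨V, hVm, hVp⟩ := Stmt19Aux.half_cont hfinal hreg B Bn hC hbound hstep b0 yb hW'c hW'm
    have m1 := t1 hVm
    rw [Filter.mem_map] at m1
    apply Filter.mem_of_superset m1
    intro p hp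
    exact hW's (hVp _ hp)
  have h3 : Filter.Tendsto (fun p : E × E => B (f a0 xa) (p.2 - f b0 yb))
      (nhds (f a0 xa, f b0 yb)) (nhds 0) := by
    rw [Filter.tendsto_def]
    intro W hW
    obtain ⟨W', ⟨hW'm, hW'c0⟩, hW's⟩ := basis.mem_iff.mp hW
    have hW'c := Stmt19Aux.convex_transfer hW'c0
    obtain ⟨V, hVm, hVp⟩ := Stmt19Aux.half_cont hfinal hreg B.flip (fun n => (Bn n).flip)
      hC hbound' hstep' a0 xa hW'c hW'm
    have m2 := t2 hVm
    rw [Filter.mem_map] at m2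
    apply Filter.mem_of_superset m2
    intro p hp
    have hWin := hVp _ hp
    rw [LinearMap.flip_apply] at hWin
    exact hW's hWin
  have heq : (fun p : E × E => B p.1 p.2) = fun p : E × E =>
      B (f a0 xa) (f b0 yb) + (B (p.1 - f a0 xa) (p.2 - f b0 yb) +
        (B (p.1 - f a0 xa) (f b0 yb) + B (f a0 xa) (p.2 - f b0 yb))) := by
    funext p
    simp only [map_sub, LinearMap.sub_apply]
    abel
  have htot := (tendsto_const_nhds : Filter.Tendsto (fun _ : E × E => B (f a0 xa) (f b0 yb))
      (nhds (f a0 xa, f b0 yb)) (nhds (B (f a0 xa) (f b0 yb)))).add (h1.add (h2.add h3))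
  rw [show (fun p : E × E => B p.1 p.2) = _ from heq]
  unfold ContinuousAt
  simpa using htot
end
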